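/- Let $S$ be a commutative ring of prime characteristic $p$, let $I \subseteq S$ be an ideal, and let $f \in S$. Then for every $e \geq 0$ one has $f^{p^e - 1}\,(I^{[p^e]} :_S I) + (I + fS)^{[p^e]} \subseteq (I + fS)^{[p^e]} :_S (I + fS)$. -/

import Mathlib

/-- Easy containment in the Fedder-type colon formula for a hypersurface section:
`f^{p^e-1} (I^{[p^e]} : I) + (I + fS)^{[p^e]} ⊆ (I + fS)^{[p^e]} : (I + fS)`. -/
theorem defect_fpt_stmt3 {S : Type*} [CommRing S] (p : ℕ) (hp : p.Prime) [CharP S p]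
    (I : Ideal S) (f : S) (e : ℕ) :
    Ideal.span {f ^ (p ^ e - 1)} * (Ideal.span ((fun x => x ^ p ^ e) '' (I : Set S))).colon I
      + Ideal.span ((fun x => x ^ p ^ e) '' ((I + Ideal.span {f} : Ideal S) : Set S))
    ≤ (Ideal.span ((fun x => x ^ p ^ e) '' ((I + Ideal.span {f} : Ideal S) : Set S))).colon
        (I + Ideal.span {f}) := by
  set q := p ^ e with hq
  set J : Ideal S := I + Ideal.span {f} with hJ
  set Jq : Ideal S := Ideal.span ((fun x => x ^ q) '' (J : Set S)) with hJq
  have hq1 : 1 ≤ q := Nat.one_le_iff_ne_zero.mpr (pow_ne_zero e hp.pos.ne')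
  have hIJ : Ideal.span ((fun x => x ^ q) '' (I : Set S)) ≤ Jq := by
    apply Ideal.span_mono
    exact Set.image_mono (by exact_mod_cast le_sup_left (b := Ideal.span {f}))
  have hfJ : f ∈ J := by
    exact le_sup_right (a := I) (Ideal.mem_span_singleton_self f)
  have hfq : f ^ q ∈ Jq := Ideal.subset_span ⟨f, hfJ, rfl⟩
  apply sup_le
  · rw [Ideal.mul_le]
    intro r hr s hs
    rw [Ideal.mem_span_singleton'] at hr
    obtain ⟨c, rfl⟩ := hr
    rw [Submodule.mem_colon] at hs ⊢
    intro x hx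
    obtain ⟨i, hi, g, hg, rfl⟩ := Submodule.mem_sup.mp hx
    obtain ⟨a, rfl⟩ := Ideal.mem_span_singleton'.mp hg
    have h1 : (c * f ^ (q - 1) * s) • i ∈ Jq := by
      have : s • i ∈ Ideal.span ((fun x => x ^ q) '' (I : Set S)) := hs i hi
      have := hIJ this
      have : (c * f ^ (q - 1)) * (s * i) ∈ Jq := Ideal.mul_mem_left _ _ this
      simpa [smul_eq_mul, mul_assoc] using this
    have h2 : (c * f ^ (q - 1) * s) • (a * f) ∈ Jq := by
      have hfq' : (c * s * a) * f ^ q ∈ Jq := Ideal.mul_mem_left _ _ hfq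
      have : f ^ (q - 1) * f = f ^ q := by
        rw [← pow_succ, Nat.sub_add_cancel hq1]
      have heq : (c * f ^ (q - 1) * s) • (a * f) = (c * s * a) * f ^ q := by
        rw [smul_eq_mul, ← this]; ring
      rw [heq]; exact hfq'
    simpa [smul_add, mul_add] using Jq.add_mem h1 h2
  · intro r hr
    rw [Submodule.mem_colon]
    intro x hx
    simpa [smul_eq_mul] using Jq.mul_mem_right x hr
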